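/- Let G be a finite graph, let T be a spanning forest of G, and let f₀ be an edge of T. Then there exists a coloring φ : C*(T,f₀) \ {f₀} → {1,…,9} such that for every edge f ∈ E(T) with C*(T,f) ∩ (C*(T,f₀) \ {f₀}) ≠ ∅, there exists a color i ∈ {1,…,8} occurring an odd number of times on C*(T,f) ∩ (C*(T,f₀) \ {f₀}). -/

import Mathlib

/-- `T` is a spanning forest of `G`: an acyclic subgraph with the same vertex set whose
components have the same vertex sets as the components of `G` (equivalently, a maximal
acyclic subgraph of `G`). -/
def IsSpanningForest {V : Type} (G T : SimpleGraph V) : Prop :=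
  T ≤ G ∧ T.IsAcyclic ∧ ∀ u v : V, G.Reachable u v ↔ T.Reachable u v

/-- The fundamental cut `C*(T, f)`: the set of edges of `G` whose endpoints lie in different
connected components of `T - f`. -/
def fundCut {V : Type} (G T : SimpleGraph V) (f : Sym2 V) : Set (Sym2 V) :=
  {e | e ∈ G.edgeSet ∧ ∃ u v : V, e = s(u, v) ∧ ¬ (T.deleteEdges {f}).Reachable u v}

set_option linter.unusedSectionVars false
set_option linter.unusedVariables false


open Finset

namespace CutColor

variable {α : Type} [DecidableEq α]

abbrev V4 := ZMod 2 × ZMod 2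

/-- split any target into two nonzero parts -/
lemma split_target (t : V4) : ∃ t₁ t₂ : V4, t₁ ≠ 0 ∧ t₂ ≠ 0 ∧ t₁ + t₂ = t := by
  revert t; decide

/-- L1 core: prescribed-sum labeling with nonzero sums on nonempty members. -/
lemma exists_labeling_aux (n : ℕ) :
    ∀ (F : Finset (Finset α)) (S : Finset α) (t : V4), F.card ≤ n →
    (∀ X ∈ F, ∀ Y ∈ F, X ⊆ Y ∨ Y ⊆ X ∨ Disjoint X Y) →
    (∀ X ∈ F, X ⊆ S) → S.Nonempty → t ≠ 0 →
    ∃ v : α → V4, (∑ a ∈ S, v a) = t ∧ ∀ X ∈ F, X.Nonempty → (∑ a ∈ X, v a) ≠ 0 := by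
  induction n with
  | zero =>
    intro F S t hn _ _ hS ht
    obtain ⟨s, hs⟩ := hS
    interval_cases h : F.card
    · rw [Finset.card_eq_zero] at h
      subst h
      refine ⟨fun a => if a = s then t else 0, ?_, by simp⟩
      rw [Finset.sum_ite_eq' S s (fun _ => t), if_pos hs]
  | succ n ih =>
    intro F S t hn hlam hsub hS ht
    by_cases hne : ∃ X ∈ F, X.Nonempty
    · -- pick a maximal-card member
      obtain ⟨X₀, hX₀F, hmax⟩ :=
        Finset.exists_max_image F Finset.card ⟨hne.choose, hne.choose_spec.1⟩
      have hX₀ne : X₀.Nonempty := by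
        obtain ⟨X, hXF, hXne⟩ := hne
        rw [← Finset.card_pos] at hXne ⊢
        exact lt_of_lt_of_le hXne (hmax X hXF)
      by_cases hX₀S : X₀ = S
      · -- recurse on F.erase X₀ with same ground set
        have hcard : (F.erase X₀).card ≤ n := by
          have := Finset.card_erase_of_mem hX₀F
          omega
        obtain ⟨v, hv1, hv2⟩ := ih (F.erase X₀) S t hcard
          (fun X hX Y hY => hlam X (Finset.mem_of_mem_erase hX) Y (Finset.mem_of_mem_erase hY))
          (fun X hX => hsub X (Finset.mem_of_mem_erase hX)) hS ht
        refine ⟨v, hv1, fun X hX hXne => ?_⟩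
        by_cases hXX : X = X₀
        · subst hXX; rw [hX₀S, hv1]; exact ht
        · exact hv2 X (Finset.mem_erase.2 ⟨hXX, hX⟩) hXne
      · -- X₀ ⊊ S
        have hssub : X₀ ⊆ S := hsub X₀ hX₀F
        have hSd : (S \ X₀).Nonempty := by
          rw [Finset.sdiff_nonempty]
          intro h
          exact hX₀S (Finset.Subset.antisymm hssub h)
        obtain ⟨t₁, t₂, ht₁, ht₂, htt⟩ := split_target t
        have hFe : (F.erase X₀).card ≤ n := by
          have := Finset.card_erase_of_mem hX₀F
          omega
        set Fin' := (F.filter (fun Y => Y ⊆ X₀)).erase X₀ with hFin'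
        set Fout := F.filter (fun Y => Disjoint Y X₀) with hFout
        have hFin'sub : Fin' ⊆ F.erase X₀ := by
          intro Y hY
          rw [hFin', Finset.mem_erase, Finset.mem_filter] at hY
          exact Finset.mem_erase.2 ⟨hY.1, hY.2.1⟩
        have hFoutsub : Fout ⊆ F.erase X₀ := by
          intro Y hY
          rw [hFout, Finset.mem_filter] at hY
          refine Finset.mem_erase.2 ⟨?_, hY.1⟩
          rintro rfl
          rw [Finset.disjoint_self_iff_empty] at hY
          exact hX₀ne.ne_empty hY.2
        obtain ⟨v₁, hv₁1, hv₁2⟩ := ih Fin' X₀ t₁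
          (le_trans (Finset.card_le_card hFin'sub) hFe)
          (fun X hX Y hY => hlam X (Finset.mem_of_mem_erase (hFin'sub hX)) Y
            (Finset.mem_of_mem_erase (hFin'sub hY)))
          (fun X hX => by
            rw [hFin', Finset.mem_erase, Finset.mem_filter] at hX
            exact hX.2.2) hX₀ne ht₁
        obtain ⟨v₂, hv₂1, hv₂2⟩ := ih Fout (S \ X₀) t₂
          (le_trans (Finset.card_le_card hFoutsub) hFe)
          (fun X hX Y hY => hlam X (Finset.mem_of_mem_erase (hFoutsub hX)) Y
            (Finset.mem_of_mem_erase (hFoutsub hY)))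
          (fun X hX => by
            rw [hFout, Finset.mem_filter] at hX
            intro a ha
            rw [Finset.mem_sdiff]
            exact ⟨hsub X hX.1 ha, fun haX => (Finset.disjoint_left.1 hX.2) ha haX⟩)
          hSd ht₂
        refine ⟨fun a => if a ∈ X₀ then v₁ a else v₂ a, ?_, ?_⟩
        · rw [← Finset.sum_sdiff hssub]
          have e1 : ∑ a ∈ S \ X₀, (if a ∈ X₀ then v₁ a else v₂ a) = ∑ a ∈ S \ X₀, v₂ a := by
            refine Finset.sum_congr rfl fun a ha => ?_
            rw [if_neg (Finset.mem_sdiff.1 ha).2]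
          have e2 : ∑ a ∈ X₀, (if a ∈ X₀ then v₁ a else v₂ a) = ∑ a ∈ X₀, v₁ a := by
            refine Finset.sum_congr rfl fun a ha => ?_
            rw [if_pos ha]
          rw [e1, e2, hv₁1, hv₂1, add_comm, htt]
        · intro X hXF hXne
          have hsumsub : ∀ Y : Finset α, Y ⊆ X₀ →
              (∑ a ∈ Y, (if a ∈ X₀ then v₁ a else v₂ a)) = ∑ a ∈ Y, v₁ a := fun Y hY =>
            Finset.sum_congr rfl fun a ha => if_pos (hY ha)
          have hsumdis : ∀ Y : Finset α, Disjoint Y X₀ →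
              (∑ a ∈ Y, (if a ∈ X₀ then v₁ a else v₂ a)) = ∑ a ∈ Y, v₂ a := fun Y hY =>
            Finset.sum_congr rfl fun a ha => if_neg (Finset.disjoint_left.1 hY ha)
          by_cases hXX : X = X₀
          · subst hXX
            rw [hsumsub X (Finset.Subset.refl X), hv₁1]
            exact ht₁
          · rcases hlam X hXF X₀ hX₀F with h | h | h
            · rw [hsumsub X h]
              exact hv₁2 X (Finset.mem_erase.2 ⟨hXX, Finset.mem_filter.2 ⟨hXF, h⟩⟩) hXne
            · exact absurd (Finset.eq_of_subset_of_card_le h (hmax X hXF)).symm hXX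
            · rw [hsumdis X h]
              exact hv₂2 X (Finset.mem_filter.2 ⟨hXF, h⟩) hXne
    · -- no nonempty members
      push_neg at hne
      obtain ⟨s, hs⟩ := hS
      refine ⟨fun a => if a = s then t else 0, ?_, fun X hX hXne => absurd hXne ?_⟩
      · rw [Finset.sum_ite_eq' S s (fun _ => t), if_pos hs]
      · simpa [Finset.not_nonempty_iff_eq_empty] using hne X hX

/-- L1: laminar family admits labeling with nonzero sums on nonempty members. -/
lemma exists_labeling (F : Finset (Finset α))
    (hlam : ∀ X ∈ F, ∀ Y ∈ F, X ⊆ Y ∨ Y ⊆ X ∨ Disjoint X Y) :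
    ∃ v : α → V4, ∀ X ∈ F, X.Nonempty → (∑ a ∈ X, v a) ≠ 0 := by
  by_cases hne : ∃ X ∈ F, X.Nonempty
  · have hS : (F.sup id).Nonempty := by
      obtain ⟨X, hXF, a, ha⟩ := hne
      exact ⟨a, Finset.le_sup (f := id) hXF ha⟩
    obtain ⟨v, _, hv⟩ := exists_labeling_aux F.card F (F.sup id) (1, 0) le_rfl hlam
      (fun X hX => Finset.le_sup (f := id) hX) hS (by decide)
    exact ⟨v, hv⟩
  · push_neg at hne
    exact ⟨fun _ => 0, fun X hX hXne => absurd hXne (by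
      simpa [Finset.not_nonempty_iff_eq_empty] using hne X hX)⟩


lemma exists_split (MF MH : Finset (Finset α))
    (hdF : ∀ A ∈ MF, ∀ B ∈ MF, A ≠ B → Disjoint A B)
    (hdH : ∀ A ∈ MH, ∀ B ∈ MH, A ≠ B → Disjoint A B)
    (hcF : ∀ A ∈ MF, 2 ≤ A.card) (hcH : ∀ A ∈ MH, 2 ≤ A.card) :
    ∃ P : Finset α, (∀ A ∈ MF, (A ∩ P).Nonempty) ∧ (∀ B ∈ MH, (B \ P).Nonempty) := by
  classical
  set ι := ({A // A ∈ MF} ⊕ {B // B ∈ MH}) with hι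
  set t : ι → Finset α := Sum.elim (fun A => A.1) (fun B => B.1) with ht
  have hcard : ∀ i : ι, 2 ≤ (t i).card := by
    rintro (A | B)
    · exact hcF A.1 A.2
    · exact hcH B.1 B.2
  -- each element is in at most 2 of the t-sets from a finset s of distinct indices
  have hdeg : ∀ (s : Finset ι) (e : α), (s.filter (fun i => e ∈ t i)).card ≤ 2 := by
    intro s e
    by_contra h
    push_neg at h
    rw [Finset.two_lt_card_iff] at h
    obtain ⟨a, b, c, ha, hb, hc, hab, hac, hbc⟩ := h
    rw [Finset.mem_filter] at ha hb hc
    -- among three distinct indices, two are on the same side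
    have key : ∀ i j : ι, i ≠ j → e ∈ t i → e ∈ t j →
        (∃ (A B : {A // A ∈ MF}), i = Sum.inl A ∧ j = Sum.inl B) ∨
        (∃ (A B : {B // B ∈ MH}), i = Sum.inr A ∧ j = Sum.inr B) → False := by
      rintro i j hij hei hej (⟨A, B, rfl, rfl⟩ | ⟨A, B, rfl, rfl⟩)
      · have hAB : A.1 ≠ B.1 := fun h => hij (by simp [Subtype.ext h])
        exact Finset.disjoint_left.1 (hdF A.1 A.2 B.1 B.2 hAB) hei hej
      · have hAB : A.1 ≠ B.1 := fun h => hij (by simp [Subtype.ext h])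
        exact Finset.disjoint_left.1 (hdH A.1 A.2 B.1 B.2 hAB) hei hej
    rcases a with A | A <;> rcases b with B | B <;> rcases c with C | C
    · exact key (Sum.inl A) (Sum.inl B) hab ha.2 hb.2 (Or.inl ⟨A, B, rfl, rfl⟩)
    · exact key (Sum.inl A) (Sum.inl B) hab ha.2 hb.2 (Or.inl ⟨A, B, rfl, rfl⟩)
    · exact key (Sum.inl A) (Sum.inl C) hac ha.2 hc.2 (Or.inl ⟨A, C, rfl, rfl⟩)
    · exact key (Sum.inr B) (Sum.inr C) hbc hb.2 hc.2 (Or.inr ⟨B, C, rfl, rfl⟩)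
    · exact key (Sum.inl B) (Sum.inl C) hbc hb.2 hc.2 (Or.inl ⟨B, C, rfl, rfl⟩)
    · exact key (Sum.inr A) (Sum.inr C) hac ha.2 hc.2 (Or.inr ⟨A, C, rfl, rfl⟩)
    · exact key (Sum.inr A) (Sum.inr B) hab ha.2 hb.2 (Or.inr ⟨A, B, rfl, rfl⟩)
    · exact key (Sum.inr A) (Sum.inr B) hab ha.2 hb.2 (Or.inr ⟨A, B, rfl, rfl⟩)
  have hall : ∀ s : Finset ι, s.card ≤ (s.biUnion t).card := by
    intro s
    have h1 : 2 * s.card ≤ ∑ i ∈ s, (t i).card := by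
      calc 2 * s.card = ∑ _i ∈ s, 2 := by rw [Finset.sum_const, smul_eq_mul, mul_comm]
      _ ≤ ∑ i ∈ s, (t i).card := Finset.sum_le_sum (fun i _ => hcard i)
    have h2 : ∑ i ∈ s, (t i).card = ∑ e ∈ s.biUnion t, (s.filter (fun i => e ∈ t i)).card := by
      have e1 : ∀ i ∈ s, (t i).card = ∑ e ∈ s.biUnion t, (if e ∈ t i then 1 else 0) := by
        intro i hi
        rw [← Finset.card_filter]
        congr 1
        rw [Finset.filter_mem_eq_inter, Finset.inter_eq_right.2]
        intro e he
        exact Finset.mem_biUnion.2 ⟨i, hi, he⟩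
      rw [Finset.sum_congr rfl e1, Finset.sum_comm]
      exact Finset.sum_congr rfl fun e _ => (Finset.card_filter _ _).symm
    have h3 : ∑ e ∈ s.biUnion t, (s.filter (fun i => e ∈ t i)).card ≤ 2 * (s.biUnion t).card := by
      calc ∑ e ∈ s.biUnion t, (s.filter (fun i => e ∈ t i)).card
          ≤ ∑ _e ∈ s.biUnion t, 2 := Finset.sum_le_sum (fun e _ => hdeg s e)
      _ = 2 * (s.biUnion t).card := by rw [Finset.sum_const, smul_eq_mul, mul_comm]
    omega
  obtain ⟨f, hfinj, hf⟩ := (Finset.all_card_le_biUnion_card_iff_exists_injective t).1 hall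
  refine ⟨Finset.image (fun A : {A // A ∈ MF} => f (Sum.inl A)) Finset.univ, ?_, ?_⟩
  · intro A hA
    exact ⟨f (Sum.inl ⟨A, hA⟩), Finset.mem_inter.2 ⟨hf (Sum.inl ⟨A, hA⟩),
      Finset.mem_image.2 ⟨⟨A, hA⟩, Finset.mem_univ _, rfl⟩⟩⟩
  · intro B hB
    refine ⟨f (Sum.inr ⟨B, hB⟩), Finset.mem_sdiff.2 ⟨hf (Sum.inr ⟨B, hB⟩), fun hmem => ?_⟩⟩
    obtain ⟨A, _, hAeq⟩ := Finset.mem_image.1 hmem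
    exact Sum.inl_ne_inr (hfinj hAeq)


lemma v4_add_self (w : V4) : w + w = 0 := by revert w; decide

lemma even_nsmul_v4 (n : ℕ) (w : V4) (h : Even n) : n • w = 0 := by
  obtain ⟨k, rfl⟩ := h
  rw [add_nsmul]
  exact v4_add_self _

lemma sum_eq_zero_of_all_even (s : Finset α) (g : α → V4)
    (h : ∀ w : V4, ¬ Odd ((s.filter (fun a => g a = w)).card)) : ∑ a ∈ s, g a = 0 := by
  classical
  rw [← Finset.sum_fiberwise_of_maps_to (g := g) (fun a _ => Finset.mem_univ (g a))]
  refine Finset.sum_eq_zero fun w _ => ?_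
  have hconst : ∑ a ∈ s.filter (fun a => g a = w), g a =
      ((s.filter (fun a => g a = w)).card) • w := by
    rw [← Finset.sum_const]
    exact Finset.sum_congr rfl fun a ha => (Finset.mem_filter.1 ha).2
  rw [hconst]
  exact even_nsmul_v4 _ _ (Nat.not_odd_iff_even.1 (h w))

lemma exists_odd_fiber (s : Finset α) (g : α → V4) (h : ∑ a ∈ s, g a ≠ 0) :
    ∃ w : V4, Odd ((s.filter (fun a => g a = w)).card) := by
  by_contra hc
  push_neg at hc
  exact h (sum_eq_zero_of_all_even s g (by simpa using hc))

lemma exists_min_even (F : Finset (Finset α)) (X : Finset α) (hX : X ∈ F) (hne : X.Nonempty)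
    (hev : Even X.card) : ∃ A ∈ F, A ⊆ X ∧ A.Nonempty ∧ Even A.card ∧
      ∀ Y ∈ F, Y ⊆ A → Y.Nonempty → Even Y.card → Y = A := by
  classical
  set C := F.filter (fun Y => Y ⊆ X ∧ Y.Nonempty ∧ Even Y.card) with hC
  have hCne : C.Nonempty := ⟨X, Finset.mem_filter.2 ⟨hX, Finset.Subset.refl X, hne, hev⟩⟩
  obtain ⟨A, hAC, hmin⟩ := Finset.exists_min_image C Finset.card hCne
  rw [hC, Finset.mem_filter] at hAC
  refine ⟨A, hAC.1, hAC.2.1, hAC.2.2.1, hAC.2.2.2, fun Y hY hYA hYne hYev => ?_⟩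
  have hYC : Y ∈ C := Finset.mem_filter.2 ⟨hY, hYA.trans hAC.2.1, hYne, hYev⟩
  exact Finset.eq_of_subset_of_card_le hYA (hmin Y hYC)

lemma enc_lt (w : V4) : w.1.val * 2 + w.2.val < 4 := by revert w; decide

lemma enc_inj (w w' : V4) (h : w.1.val * 2 + w.2.val = w'.1.val * 2 + w'.2.val) : w = w' := by
  revert w w'; decide

theorem exists_nine_coloring (F H : Finset (Finset α))
    (hF : ∀ X ∈ F, ∀ Y ∈ F, X ⊆ Y ∨ Y ⊆ X ∨ Disjoint X Y)
    (hH : ∀ X ∈ H, ∀ Y ∈ H, X ⊆ Y ∨ Y ⊆ X ∨ Disjoint X Y) :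
    ∃ φ : α → Fin 9, ∀ X : Finset α, (X ∈ F ∨ X ∈ H) → X.Nonempty →
      ∃ i : Fin 9, (i : ℕ) < 8 ∧ Odd ((X.filter (fun e => φ e = i)).card) := by
  classical
  set MF := F.filter (fun X => X.Nonempty ∧ Even X.card ∧
    ∀ Y ∈ F, Y ⊆ X → Y.Nonempty → Even Y.card → Y = X) with hMF
  set MH := H.filter (fun X => X.Nonempty ∧ Even X.card ∧
    ∀ Y ∈ H, Y ⊆ X → Y.Nonempty → Even Y.card → Y = X) with hMH
  have hMFd : ∀ A ∈ MF, ∀ B ∈ MF, A ≠ B → Disjoint A B := by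
    intro A hA B hB hAB
    rw [hMF, Finset.mem_filter] at hA hB
    rcases hF A hA.1 B hB.1 with h | h | h
    · exact absurd (hB.2.2.2 A hA.1 h hA.2.1 hA.2.2.1) hAB
    · exact absurd (hA.2.2.2 B hB.1 h hB.2.1 hB.2.2.1).symm hAB
    · exact h
  have hMHd : ∀ A ∈ MH, ∀ B ∈ MH, A ≠ B → Disjoint A B := by
    intro A hA B hB hAB
    rw [hMH, Finset.mem_filter] at hA hB
    rcases hH A hA.1 B hB.1 with h | h | h
    · exact absurd (hB.2.2.2 A hA.1 h hA.2.1 hA.2.2.1) hAB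
    · exact absurd (hA.2.2.2 B hB.1 h hB.2.1 hB.2.2.1).symm hAB
    · exact h
  have hcard2 : ∀ (M : Finset (Finset α)) (A : Finset α), A.Nonempty → Even A.card →
      2 ≤ A.card := by
    intro M A hne hev
    obtain ⟨k, hk⟩ := hev
    have := Finset.card_pos.2 hne
    omega
  obtain ⟨P, hPF, hPH⟩ := exists_split MF MH hMFd hMHd
    (fun A hA => hcard2 MF A (Finset.mem_filter.1 hA).2.1 (Finset.mem_filter.1 hA).2.2.1)
    (fun A hA => hcard2 MH A (Finset.mem_filter.1 hA).2.1 (Finset.mem_filter.1 hA).2.2.1)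
  obtain ⟨vF, hvF⟩ := exists_labeling (F.image (· ∩ P)) (by
    intro Z hZ W hW
    obtain ⟨X, hX, rfl⟩ := Finset.mem_image.1 hZ
    obtain ⟨Y, hY, rfl⟩ := Finset.mem_image.1 hW
    rcases hF X hX Y hY with h | h | h
    · exact Or.inl (Finset.inter_subset_inter h (Finset.Subset.refl P))
    · exact Or.inr (Or.inl (Finset.inter_subset_inter h (Finset.Subset.refl P)))
    · exact Or.inr (Or.inr (h.mono Finset.inter_subset_left Finset.inter_subset_left)))
  obtain ⟨vH, hvH⟩ := exists_labeling (H.image (· \ P)) (by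
    intro Z hZ W hW
    obtain ⟨X, hX, rfl⟩ := Finset.mem_image.1 hZ
    obtain ⟨Y, hY, rfl⟩ := Finset.mem_image.1 hW
    rcases hH X hX Y hY with h | h | h
    · exact Or.inl (Finset.sdiff_subset_sdiff h (Finset.Subset.refl P))
    · exact Or.inr (Or.inl (Finset.sdiff_subset_sdiff h (Finset.Subset.refl P)))
    · exact Or.inr (Or.inr (h.mono Finset.sdiff_subset Finset.sdiff_subset)))
  refine ⟨fun e => if e ∈ P then ⟨(vF e).1.val * 2 + (vF e).2.val, by have := enc_lt (vF e); omega⟩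
    else ⟨4 + ((vH e).1.val * 2 + (vH e).2.val), by have := enc_lt (vH e); omega⟩, ?_⟩
  intro X hXFH hXne
  rcases hXFH with hXF | hXH
  · by_cases hXP : (X ∩ P).Nonempty
    · have hsum : ∑ a ∈ X ∩ P, vF a ≠ 0 :=
        hvF (X ∩ P) (Finset.mem_image.2 ⟨X, hXF, rfl⟩) hXP
      obtain ⟨w, hw⟩ := exists_odd_fiber _ _ hsum
      refine ⟨⟨w.1.val * 2 + w.2.val, by have := enc_lt w; omega⟩,
        by simpa using (by have := enc_lt w; omega : w.1.val * 2 + w.2.val < 8), ?_⟩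
      convert hw using 2
      ext e
      simp only [Finset.mem_filter, Finset.mem_inter]
      constructor
      · rintro ⟨heX, hφ⟩
        by_cases heP : e ∈ P
        · rw [if_pos heP, Fin.mk.injEq] at hφ
          exact ⟨⟨heX, heP⟩, enc_inj _ _ hφ⟩
        · rw [if_neg heP, Fin.mk.injEq] at hφ
          have := enc_lt w
          omega
      · rintro ⟨⟨heX, heP⟩, hvw⟩
        refine ⟨heX, ?_⟩
        rw [if_pos heP, Fin.mk.injEq, hvw]
    · rw [Finset.not_nonempty_iff_eq_empty] at hXP
      by_cases hev : Even X.card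
      · obtain ⟨A, hAF, hAX, hAne, hAev, hAmin⟩ := exists_min_even F X hXF hXne hev
        have hAMF : A ∈ MF := Finset.mem_filter.2 ⟨hAF, hAne, hAev, hAmin⟩
        have := hPF A hAMF
        rw [Finset.eq_empty_iff_forall_notMem] at hXP
        obtain ⟨a, ha⟩ := this
        rw [Finset.mem_inter] at ha
        exact absurd (Finset.mem_inter.2 ⟨hAX ha.1, ha.2⟩) (hXP a)
      · -- |X| odd: some fiber among the 9 must be odd; fiber 8 is empty
        by_contra hcon
        push_neg at hcon
        have hall : ∀ i : Fin 9, Even ((X.filter (fun e =>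
            (if e ∈ P then (⟨(vF e).1.val * 2 + (vF e).2.val, by have := enc_lt (vF e); omega⟩ : Fin 9)
            else ⟨4 + ((vH e).1.val * 2 + (vH e).2.val), by have := enc_lt (vH e); omega⟩) = i)).card) := by
          intro i
          by_cases hi : (i : ℕ) < 8
          · exact Nat.not_odd_iff_even.1 (hcon i hi)
          · have h8 : (i : ℕ) = 8 := by omega
            have : X.filter (fun e =>
                (if e ∈ P then (⟨(vF e).1.val * 2 + (vF e).2.val, by have := enc_lt (vF e); omega⟩ : Fin 9)
                else ⟨4 + ((vH e).1.val * 2 + (vH e).2.val), by have := enc_lt (vH e); omega⟩) = i) = ∅ := by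
              rw [Finset.eq_empty_iff_forall_notMem]
              intro e he
              rw [Finset.mem_filter] at he
              have := he.2
              by_cases heP : e ∈ P
              · rw [if_pos heP] at this
                have hval := congrArg Fin.val this
                simp only at hval
                have := enc_lt (vF e)
                omega
              · rw [if_neg heP] at this
                have hval := congrArg Fin.val this
                simp only at hval
                have := enc_lt (vH e)
                omega
            rw [this]
            simp
        have hXeven : Even X.card := by
          rw [Finset.card_eq_sum_card_fiberwise (f := fun e =>
            (if e ∈ P then (⟨(vF e).1.val * 2 + (vF e).2.val, by have := enc_lt (vF e); omega⟩ : Fin 9)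
            else ⟨4 + ((vH e).1.val * 2 + (vH e).2.val), by have := enc_lt (vH e); omega⟩))
            (t := Finset.univ) (fun e _ => Finset.mem_univ _)]
          exact Finset.even_sum _ fun i _ => hall i
        exact hev hXeven
  · -- H side, symmetric with X \ P
    by_cases hXP : (X \ P).Nonempty
    · have hsum : ∑ a ∈ X \ P, vH a ≠ 0 :=
        hvH (X \ P) (Finset.mem_image.2 ⟨X, hXH, rfl⟩) hXP
      obtain ⟨w, hw⟩ := exists_odd_fiber _ _ hsum
      refine ⟨⟨4 + (w.1.val * 2 + w.2.val), by have := enc_lt w; omega⟩,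
        by simpa using (by have := enc_lt w; omega : 4 + (w.1.val * 2 + w.2.val) < 8), ?_⟩
      convert hw using 2
      ext e
      simp only [Finset.mem_filter, Finset.mem_sdiff]
      constructor
      · rintro ⟨heX, hφ⟩
        by_cases heP : e ∈ P
        · rw [if_pos heP, Fin.mk.injEq] at hφ
          have := enc_lt (vF e)
          omega
        · rw [if_neg heP, Fin.mk.injEq] at hφ
          have h4 : (vH e).1.val * 2 + (vH e).2.val = w.1.val * 2 + w.2.val := by omega
          exact ⟨⟨heX, heP⟩, enc_inj _ _ h4⟩
      · rintro ⟨⟨heX, heP⟩, hvw⟩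
        refine ⟨heX, ?_⟩
        rw [if_neg heP, Fin.mk.injEq, hvw]
    · rw [Finset.not_nonempty_iff_eq_empty] at hXP
      by_cases hev : Even X.card
      · obtain ⟨A, hAH, hAX, hAne, hAev, hAmin⟩ := exists_min_even H X hXH hXne hev
        have hAMH : A ∈ MH := Finset.mem_filter.2 ⟨hAH, hAne, hAev, hAmin⟩
        have := hPH A hAMH
        rw [Finset.eq_empty_iff_forall_notMem] at hXP
        obtain ⟨a, ha⟩ := this
        rw [Finset.mem_sdiff] at ha
        exact absurd (Finset.mem_sdiff.2 ⟨hAX ha.1, ha.2⟩) (hXP a)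
      · by_contra hcon
        push_neg at hcon
        have hall : ∀ i : Fin 9, Even ((X.filter (fun e =>
            (if e ∈ P then (⟨(vF e).1.val * 2 + (vF e).2.val, by have := enc_lt (vF e); omega⟩ : Fin 9)
            else ⟨4 + ((vH e).1.val * 2 + (vH e).2.val), by have := enc_lt (vH e); omega⟩) = i)).card) := by
          intro i
          by_cases hi : (i : ℕ) < 8
          · exact Nat.not_odd_iff_even.1 (hcon i hi)
          · have h8 : (i : ℕ) = 8 := by omega
            have : X.filter (fun e =>
                (if e ∈ P then (⟨(vF e).1.val * 2 + (vF e).2.val, by have := enc_lt (vF e); omega⟩ : Fin 9)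
                else ⟨4 + ((vH e).1.val * 2 + (vH e).2.val), by have := enc_lt (vH e); omega⟩) = i) = ∅ := by
              rw [Finset.eq_empty_iff_forall_notMem]
              intro e he
              rw [Finset.mem_filter] at he
              have := he.2
              by_cases heP : e ∈ P
              · rw [if_pos heP] at this
                have hval := congrArg Fin.val this
                simp only at hval
                have := enc_lt (vF e)
                omega
              · rw [if_neg heP] at this
                have hval := congrArg Fin.val this
                simp only at hval
                have := enc_lt (vH e)
                omega
            rw [this]
            simp
        have hXeven : Even X.card := by
          rw [Finset.card_eq_sum_card_fiberwise (f := fun e =>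
            (if e ∈ P then (⟨(vF e).1.val * 2 + (vF e).2.val, by have := enc_lt (vF e); omega⟩ : Fin 9)
            else ⟨4 + ((vH e).1.val * 2 + (vH e).2.val), by have := enc_lt (vH e); omega⟩))
            (t := Finset.univ) (fun e _ => Finset.mem_univ _)]
          exact Finset.even_sum _ fun i _ => hall i
        exact hev hXeven

end CutColor
namespace CutColor
variable {V : Type}

/-- Reachability decomposition across a bridge-like edge. -/
lemma reach_decomp (H : SimpleGraph V) (x y : V)
    (hbr : ¬ (H.deleteEdges {s(x,y)}).Reachable x y) {u v : V} (h : H.Reachable u v) :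
    (H.deleteEdges {s(x,y)}).Reachable u v ∨
    ((H.deleteEdges {s(x,y)}).Reachable u x ∧ (H.deleteEdges {s(x,y)}).Reachable y v) ∨
    ((H.deleteEdges {s(x,y)}).Reachable u y ∧ (H.deleteEdges {s(x,y)}).Reachable x v) := by
  obtain ⟨w⟩ := h
  induction w with
  | nil => exact Or.inl (SimpleGraph.Reachable.refl _)
  | @cons a b c hab q ih =>
    by_cases he : s(a,b) = s(x,y)
    · rw [Sym2.eq_iff] at he
      rcases he with ⟨rfl, rfl⟩ | ⟨rfl, rfl⟩
      · -- a = x, b = y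
        rcases ih with h1 | ⟨h1, h2⟩ | ⟨h1, h2⟩
        · exact Or.inr (Or.inl ⟨SimpleGraph.Reachable.refl _, h1⟩)
        · exact absurd h1.symm hbr
        · exact Or.inl h2
      · -- a = y, b = x
        rcases ih with h1 | ⟨h1, h2⟩ | ⟨h1, h2⟩
        · exact Or.inr (Or.inr ⟨SimpleGraph.Reachable.refl _, h1⟩)
        · exact Or.inl h2
        · exact absurd h1 hbr
    · have hadj : (H.deleteEdges {s(x,y)}).Adj a b := by
        rw [SimpleGraph.deleteEdges_adj]
        exact ⟨hab, by simpa using he⟩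
      rcases ih with h1 | ⟨h1, h2⟩ | ⟨h1, h2⟩
      · exact Or.inl (hadj.reachable.trans h1)
      · exact Or.inr (Or.inl ⟨hadj.reachable.trans h1, h2⟩)
      · exact Or.inr (Or.inr ⟨hadj.reachable.trans h1, h2⟩)

lemma delete_anti_reach {T : SimpleGraph V} {s s' : Set (Sym2 V)} (h : s ⊆ s') {u v : V}
    (hr : (T.deleteEdges s').Reachable u v) : (T.deleteEdges s).Reachable u v :=
  hr.mono (SimpleGraph.deleteEdges_anti h)

lemma delete_reach_T {T : SimpleGraph V} {s : Set (Sym2 V)} {u v : V}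
    (hr : (T.deleteEdges s).Reachable u v) : T.Reachable u v :=
  hr.mono (SimpleGraph.deleteEdges_le s)

/-- every edge of an acyclic graph is a bridge (deleteEdges form) -/
lemma acyclic_bridge {T : SimpleGraph V} (hac : T.IsAcyclic) {x y : V}
    (hf : s(x,y) ∈ T.edgeSet) : ¬ (T.deleteEdges {s(x,y)}).Reachable x y := by
  have := (SimpleGraph.isAcyclic_iff_forall_edge_isBridge.1 hac) hf
  rw [SimpleGraph.isBridge_iff] at this
  exact this

end CutColor

namespace CutColor2
open CutColor
variable {V : Type} {T : SimpleGraph V}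

/-- far side of an edge: vertices T-connected to x₀ but cut off when the edge is removed -/
def Dset (T : SimpleGraph V) (x₀ : V) (f : Sym2 V) : Set V :=
  {w | T.Reachable w x₀ ∧ ¬ (T.deleteEdges {f}).Reachable w x₀}

lemma far_unique (hac : T.IsAcyclic) {x y x₀ : V} (hf : s(x,y) ∈ T.edgeSet)
    (hx : T.Reachable x x₀) (h1 : ¬ (T.deleteEdges {s(x,y)}).Reachable x x₀)
    (h2 : ¬ (T.deleteEdges {s(x,y)}).Reachable y x₀) : False := by
  rcases reach_decomp T x y (acyclic_bridge hac hf) hx with h | ⟨ha, hb⟩ | ⟨ha, hb⟩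
  · exact h1 h
  · exact h2 hb
  · exact acyclic_bridge hac hf ha

lemma D_far (hac : T.IsAcyclic) {x y x₀ z : V} (hf : s(x,y) ∈ T.edgeSet)
    (hz : z ∈ Dset T x₀ s(x,y)) :
    ∃ r, (r = x ∨ r = y) ∧ ¬ (T.deleteEdges {s(x,y)}).Reachable r x₀ ∧
      (T.deleteEdges {s(x,y)}).Reachable z r := by
  rcases reach_decomp T x y (acyclic_bridge hac hf) hz.1 with h | ⟨ha, hb⟩ | ⟨ha, hb⟩
  · exact absurd h hz.2
  · exact ⟨x, Or.inl rfl, fun hc => hz.2 (ha.trans hc), ha⟩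
  · exact ⟨y, Or.inr rfl, fun hc => hz.2 (ha.trans hc), ha⟩

lemma delete_pair_left {f g : Sym2 V} {u v : V}
    (h : ((T.deleteEdges {f}).deleteEdges {g}).Reachable u v) :
    (T.deleteEdges {f}).Reachable u v :=
  delete_reach_T h

lemma delete_pair_right {f g : Sym2 V} {u v : V}
    (h : ((T.deleteEdges {f}).deleteEdges {g}).Reachable u v) :
    (T.deleteEdges {g}).Reachable u v := by
  rw [SimpleGraph.deleteEdges_deleteEdges] at h
  exact delete_anti_reach (by simp) h

lemma bridge_in_delete (hac : T.IsAcyclic) {f : Sym2 V} {x y : V}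
    (hg : s(x,y) ∈ T.edgeSet) :
    ¬ ((T.deleteEdges {f}).deleteEdges {s(x,y)}).Reachable x y :=
  fun h => acyclic_bridge hac hg (delete_pair_right h)

lemma D_key (hac : T.IsAcyclic) {x y xg yg x₀ r : V}
    (hf : s(x,y) ∈ T.edgeSet) (hg : s(xg,yg) ∈ T.edgeSet)
    (hr : r = xg ∨ r = yg)
    (hrfar : ¬ (T.deleteEdges {s(xg,yg)}).Reachable r x₀)
    (hrDf : r ∈ Dset T x₀ s(x,y)) :
    ∀ w ∈ Dset T x₀ s(xg,yg), w ∈ Dset T x₀ s(x,y) := by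
  intro w hw
  refine ⟨hw.1, fun hρ => ?_⟩
  rcases reach_decomp (T.deleteEdges {s(x,y)}) xg yg (bridge_in_delete hac hg) hρ with
    h | ⟨ha, hb⟩ | ⟨ha, hb⟩
  · exact hw.2 (delete_pair_right h)
  · rcases hr with rfl | rfl
    · exact hrDf.2 ((delete_pair_left ha).symm.trans hρ)
    · exact hrfar (delete_pair_right hb)
  · rcases hr with rfl | rfl
    · exact hrfar (delete_pair_right hb)
    · exact hrDf.2 ((delete_pair_left ha).symm.trans hρ)

lemma D_laminar (hac : T.IsAcyclic) {x y xg yg x₀ z : V}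
    (hf : s(x,y) ∈ T.edgeSet) (hg : s(xg,yg) ∈ T.edgeSet)
    (hzf : z ∈ Dset T x₀ s(x,y)) (hzg : z ∈ Dset T x₀ s(xg,yg)) :
    (∀ w ∈ Dset T x₀ s(x,y), w ∈ Dset T x₀ s(xg,yg)) ∨
    (∀ w ∈ Dset T x₀ s(xg,yg), w ∈ Dset T x₀ s(x,y)) := by
  obtain ⟨rf, hrf, hrffar, hzrf⟩ := D_far hac hf hzf
  obtain ⟨rg, hrg, hrgfar, hzrg⟩ := D_far hac hg hzg
  by_cases hrgDf : rg ∈ Dset T x₀ s(x,y)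
  · exact Or.inr (D_key hac hf hg hrg hrgfar hrgDf)
  · by_cases hrfDg : rf ∈ Dset T x₀ s(xg,yg)
    · exact Or.inl (D_key hac hg hf hrf hrffar hrfDg)
    · exfalso
      have hTrg : T.Reachable rg x₀ := ((delete_reach_T hzrg).symm.trans hzg.1)
      have hTrf : T.Reachable rf x₀ := ((delete_reach_T hzrf).symm.trans hzf.1)
      have hρfrg : (T.deleteEdges {s(x,y)}).Reachable rg x₀ := by
        by_contra hc
        exact hrgDf ⟨hTrg, hc⟩
      have hρgrf : (T.deleteEdges {s(xg,yg)}).Reachable rf x₀ := by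
        by_contra hc
        exact hrfDg ⟨hTrf, hc⟩
      rcases reach_decomp (T.deleteEdges {s(xg,yg)}) x y (bridge_in_delete hac hf) hzrg with
        h | ⟨ha, hb⟩ | ⟨ha, hb⟩
      · exact hzf.2 ((delete_pair_right h).trans hρfrg)
      · -- (T−g−f).Reach z x ; x plays role of a
        have hρfzx : (T.deleteEdges {s(x,y)}).Reachable z x := delete_pair_right ha
        by_cases hxx₀ : (T.deleteEdges {s(x,y)}).Reachable x x₀
        · exact hzf.2 (hρfzx.trans hxx₀)
        · -- x is far for f, so x = rf
          have hxrf : x = rf := by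
            rcases hrf with rfl | rfl
            · rfl
            · exact absurd (far_unique hac hf ((delete_reach_T hρfzx).symm.trans hzf.1)
                hxx₀ hrffar) not_false
          subst hxrf
          exact hzg.2 ((delete_pair_left ha).trans hρgrf)
      · have hρfzy : (T.deleteEdges {s(x,y)}).Reachable z y := delete_pair_right ha
        by_cases hyx₀ : (T.deleteEdges {s(x,y)}).Reachable y x₀
        · exact hzf.2 (hρfzy.trans hyx₀)
        · have hyrf : y = rf := by
            rcases hrf with rfl | rfl
            · exact absurd (far_unique hac hf hTrf hrffar hyx₀) not_false
            · rfl
          subst hyrf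
          exact hzg.2 ((delete_pair_left ha).trans hρgrf)

end CutColor2

namespace CutColor3
open CutColor CutColor2
variable {V : Type} {T : SimpleGraph V}

lemma AB_disj (hac : T.IsAcyclic) {x₀ y₀ w : V} (h01 : T.Adj x₀ y₀)
    (hA : (T.deleteEdges {s(x₀,y₀)}).Reachable w x₀)
    (hB : (T.deleteEdges {s(x₀,y₀)}).Reachable w y₀) : False :=
  acyclic_bridge hac (T.mem_edgeSet.2 h01) (hA.symm.trans hB)

lemma side_of_reach (hac : T.IsAcyclic) {x₀ y₀ w : V} (h01 : T.Adj x₀ y₀)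
    (hw : T.Reachable w x₀) :
    (T.deleteEdges {s(x₀,y₀)}).Reachable w x₀ ∨ (T.deleteEdges {s(x₀,y₀)}).Reachable w y₀ := by
  rcases reach_decomp T x₀ y₀ (acyclic_bridge hac (T.mem_edgeSet.2 h01)) hw with
    h | ⟨ha, hb⟩ | ⟨ha, hb⟩
  · exact Or.inl h
  · exact Or.inl ha
  · exact Or.inr ha

lemma Bside_reach (hac : T.IsAcyclic) {x₀ y₀ : V} (h01 : T.Adj x₀ y₀) {x y : V}
    (hxy : s(x,y) ∈ T.edgeSet)
    (hAx : (T.deleteEdges {s(x₀,y₀)}).Reachable x x₀)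
    (hAy : (T.deleteEdges {s(x₀,y₀)}).Reachable y x₀)
    {v : V} (hv : (T.deleteEdges {s(x₀,y₀)}).Reachable v y₀) :
    (T.deleteEdges {s(x,y)}).Reachable v x₀ := by
  have hne : s(x₀,y₀) ≠ s(x,y) := by
    intro h
    rw [Sym2.eq_iff] at h
    rcases h with ⟨rfl, rfl⟩ | ⟨rfl, rfl⟩
    · exact AB_disj hac h01 hAy (SimpleGraph.Reachable.refl _)
    · exact AB_disj hac h01 hAx (SimpleGraph.Reachable.refl _)
  rcases reach_decomp (T.deleteEdges {s(x₀,y₀)}) x y (bridge_in_delete hac hxy) hv with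
    h | ⟨ha, hb⟩ | ⟨ha, hb⟩
  · have h1 : (T.deleteEdges {s(x,y)}).Reachable v y₀ := delete_pair_right h
    have hadj : (T.deleteEdges {s(x,y)}).Adj x₀ y₀ := by
      rw [SimpleGraph.deleteEdges_adj]
      exact ⟨h01, by simpa using hne⟩
    exact h1.trans hadj.symm.reachable
  · exact (AB_disj hac h01 hAy (delete_pair_left hb)).elim
  · exact (AB_disj hac h01 hAx (delete_pair_left hb)).elim

lemma cut_iff (hac : T.IsAcyclic) {x₀ y₀ : V} (h01 : T.Adj x₀ y₀) {x y u v : V}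
    (hxy : s(x,y) ∈ T.edgeSet)
    (hAx : (T.deleteEdges {s(x₀,y₀)}).Reachable x x₀)
    (hAy : (T.deleteEdges {s(x₀,y₀)}).Reachable y x₀)
    (hu : (T.deleteEdges {s(x₀,y₀)}).Reachable u x₀)
    (hv : (T.deleteEdges {s(x₀,y₀)}).Reachable v y₀) :
    (¬ (T.deleteEdges {s(x,y)}).Reachable u v) ↔ u ∈ Dset T x₀ s(x,y) := by
  have hvx₀ : (T.deleteEdges {s(x,y)}).Reachable v x₀ := Bside_reach hac h01 hxy hAx hAy hv
  constructor
  · intro h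
    exact ⟨delete_reach_T hu, fun hc => h (hc.trans hvx₀.symm)⟩
  · intro hD hc
    exact hD.2 (hc.trans hvx₀)

lemma trichotomy (hac : T.IsAcyclic) {x₀ y₀ : V} (h01 : T.Adj x₀ y₀) {x y u v : V}
    (hxy : s(x,y) ∈ T.edgeSet)
    (hu : (T.deleteEdges {s(x₀,y₀)}).Reachable u x₀)
    (hv : (T.deleteEdges {s(x₀,y₀)}).Reachable v y₀)
    (hTuv : T.Reachable u v)
    (hcut : ¬ (T.deleteEdges {s(x,y)}).Reachable u v) :
    ((T.deleteEdges {s(x₀,y₀)}).Reachable x x₀ ∧ (T.deleteEdges {s(x₀,y₀)}).Reachable y x₀) ∨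
    ((T.deleteEdges {s(x₀,y₀)}).Reachable x y₀ ∧ (T.deleteEdges {s(x₀,y₀)}).Reachable y y₀) ∨
    s(x,y) = s(x₀,y₀) := by
  by_cases heq : s(x,y) = s(x₀,y₀)
  · exact Or.inr (Or.inr heq)
  · have hxyadj : (T.deleteEdges {s(x₀,y₀)}).Adj x y := by
      rw [SimpleGraph.deleteEdges_adj]
      exact ⟨T.mem_edgeSet.1 hxy, by simpa using heq⟩
    have hTx : T.Reachable x x₀ := by
      rcases reach_decomp T x y (acyclic_bridge hac hxy) hTuv with h | ⟨ha, hb⟩ | ⟨ha, hb⟩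
      · exact absurd h hcut
      · exact (delete_reach_T ha).symm.trans (delete_reach_T hu)
      · exact (T.mem_edgeSet.1 hxy).reachable.trans
          (((delete_reach_T ha).symm.trans (delete_reach_T hu)))
    rcases side_of_reach hac h01 hTx with h | h
    · exact Or.inl ⟨h, hxyadj.symm.reachable.trans h⟩
    · exact Or.inr (Or.inl ⟨h, hxyadj.symm.reachable.trans h⟩)

end CutColor3


namespace CutColor4
open CutColor CutColor2 CutColor3
variable {V : Type}

lemma fundCut_iff_rep {G T : SimpleGraph V} {f e : Sym2 V} {u v : V}
    (heq : e = s(u,v)) (heG : e ∈ G.edgeSet) :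
    e ∈ fundCut G T f ↔ ¬ (T.deleteEdges {f}).Reachable u v := by
  unfold fundCut
  simp only [Set.mem_setOf_eq]
  constructor
  · rintro ⟨-, u', v', heq', hnr⟩
    have h2 : s(u,v) = s(u',v') := heq.symm.trans heq'
    rw [Sym2.eq_iff] at h2
    rcases h2 with ⟨rfl, rfl⟩ | ⟨rfl, rfl⟩
    · exact hnr
    · exact fun h => hnr h.symm
  · intro h
    exact ⟨heG, u, v, heq, h⟩

end CutColor4

/-- The fundamental cuts of a fixed fundamental cut `C*(T, f₀)` minus `f₀` can be 9-colored
so that every fundamental cut meeting `C*(T, f₀) \ {f₀}` sees one of the first 8 colors an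
odd number of times. -/
theorem one_fundamental_cut_coloring {V : Type} [Fintype V] (G T : SimpleGraph V)
    (hT : IsSpanningForest G T) (f₀ : Sym2 V) (hf₀ : f₀ ∈ T.edgeSet) :
    ∃ φ : Sym2 V → Fin 9,
      ∀ f ∈ T.edgeSet, (fundCut G T f ∩ (fundCut G T f₀ \ {f₀})).Nonempty →
        ∃ i : Fin 9, (i : ℕ) < 8 ∧
          Odd {e | e ∈ fundCut G T f ∩ (fundCut G T f₀ \ {f₀}) ∧ φ e = i}.ncard := by
  classical
  open CutColor CutColor2 CutColor3 CutColor4 in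
  obtain ⟨hle, hac, hreach⟩ := hT
  revert hf₀
  induction f₀ using Sym2.ind with | _ x₀ y₀ => ?_
  intro hf₀
  have h01 : T.Adj x₀ y₀ := T.mem_edgeSet.1 hf₀
  have hbr0 : ¬ (T.deleteEdges {s(x₀,y₀)}).Reachable x₀ y₀ := acyclic_bridge hac hf₀
  set S : Set (Sym2 V) := fundCut G T s(x₀,y₀) \ {s(x₀,y₀)} with hSdef
  have hSfin : S.Finite := Set.toFinite S
  set SS : Finset (Sym2 V) := hSfin.toFinset with hSS
  -- choose canonical endpoints for each e ∈ S
  have hrep : ∀ e : Sym2 V, ∃ p : V × V, e ∈ SS →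
      (e = s(p.1, p.2) ∧ (T.deleteEdges {s(x₀,y₀)}).Reachable p.1 x₀ ∧
        (T.deleteEdges {s(x₀,y₀)}).Reachable p.2 y₀ ∧ T.Reachable p.1 p.2 ∧
        e ∈ G.edgeSet) := by
    intro e
    by_cases he : e ∈ SS
    · have heS : e ∈ S := hSfin.mem_toFinset.1 he
      obtain ⟨hec, -⟩ := heS
      obtain ⟨heG, u, v, heq, hnr⟩ := hec
      have hadj : G.Adj u v := G.mem_edgeSet.1 (heq ▸ heG)
      have hTuv : T.Reachable u v := (hreach u v).1 hadj.reachable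
      rcases reach_decomp T x₀ y₀ hbr0 hTuv with h | ⟨ha, hb⟩ | ⟨ha, hb⟩
      · exact absurd h hnr
      · exact ⟨(u, v), fun _ => ⟨heq, ha, hb.symm, hTuv, heG⟩⟩
      · exact ⟨(v, u), fun _ => ⟨heq.trans (Sym2.eq_swap), hb.symm, ha, hTuv.symm, heG⟩⟩
    · exact ⟨(x₀, y₀), fun h => absurd h he⟩
  choose pe hpe using hrep
  have hET : T.edgeSet.Finite := Set.toFinite _
  set ET : Finset (Sym2 V) := hET.toFinset with hETdef
  set XF : Sym2 V → Finset (Sym2 V) := fun f => SS.filter (fun e => e ∈ fundCut G T f)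
    with hXF
  -- formula on the A side
  have hformA : ∀ x y : V, s(x,y) ∈ T.edgeSet →
      (T.deleteEdges {s(x₀,y₀)}).Reachable x x₀ →
      (T.deleteEdges {s(x₀,y₀)}).Reachable y x₀ →
      XF s(x,y) = SS.filter (fun e => (pe e).1 ∈ Dset T x₀ s(x,y)) := by
    intro x y hxy hAx hAy
    rw [hXF]
    ext e
    simp only [Finset.mem_filter, and_congr_right_iff]
    intro he
    obtain ⟨heq, hu, hv, hTuv, heG⟩ := hpe e he
    rw [fundCut_iff_rep heq heG]
    exact cut_iff hac h01 hxy hAx hAy hu hv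
  -- formula on the B side
  have hsw : s(y₀,x₀) = s(x₀,y₀) := Sym2.eq_swap
  have hformB : ∀ x y : V, s(x,y) ∈ T.edgeSet →
      (T.deleteEdges {s(x₀,y₀)}).Reachable x y₀ →
      (T.deleteEdges {s(x₀,y₀)}).Reachable y y₀ →
      XF s(x,y) = SS.filter (fun e => (pe e).2 ∈ Dset T y₀ s(x,y)) := by
    intro x y hxy hBx hBy
    rw [hXF]
    ext e
    simp only [Finset.mem_filter, and_congr_right_iff]
    intro he
    obtain ⟨heq, hu, hv, hTuv, heG⟩ := hpe e he
    have heq' : e = s((pe e).2, (pe e).1) := heq.trans (Sym2.eq_swap)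
    rw [fundCut_iff_rep heq' heG]
    refine cut_iff (x₀ := y₀) (y₀ := x₀) hac h01.symm hxy ?_ ?_ ?_ ?_ <;>
      rw [hsw]
    · exact hBx
    · exact hBy
    · exact hv
    · exact hu
  set famA : Finset (Finset (Sym2 V)) :=
    ((ET.filter (fun f => ∃ x y : V, f = s(x,y) ∧
        (T.deleteEdges {s(x₀,y₀)}).Reachable x x₀ ∧
        (T.deleteEdges {s(x₀,y₀)}).Reachable y x₀)).image XF) ∪ {SS} with hfamA
  set famB : Finset (Finset (Sym2 V)) :=
    (ET.filter (fun f => ∃ x y : V, f = s(x,y) ∧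
        (T.deleteEdges {s(x₀,y₀)}).Reachable x y₀ ∧
        (T.deleteEdges {s(x₀,y₀)}).Reachable y y₀)).image XF with hfamB
  have hXFsub : ∀ f, XF f ⊆ SS := fun f => Finset.filter_subset _ _
  have hlamA : ∀ X ∈ famA, ∀ Y ∈ famA, X ⊆ Y ∨ Y ⊆ X ∨ Disjoint X Y := by
    intro X hX Y hY
    rw [hfamA, Finset.mem_union, Finset.mem_singleton] at hX hY
    rcases hY with hY | rfl
    · rcases hX with hX | rfl
      · obtain ⟨f, hf, rfl⟩ := Finset.mem_image.1 hX
        obtain ⟨g, hg, rfl⟩ := Finset.mem_image.1 hY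
        rw [Finset.mem_filter] at hf hg
        obtain ⟨hfe, x, y, rfl, hAx, hAy⟩ := hf
        obtain ⟨hge, xg, yg, rfl, hAxg, hAyg⟩ := hg
        have hfe' : s(x,y) ∈ T.edgeSet := hET.mem_toFinset.1 hfe
        have hge' : s(xg,yg) ∈ T.edgeSet := hET.mem_toFinset.1 hge
        rw [hformA x y hfe' hAx hAy, hformA xg yg hge' hAxg hAyg]
        by_cases hdis : Disjoint (SS.filter (fun e => (pe e).1 ∈ Dset T x₀ s(x,y)))
            (SS.filter (fun e => (pe e).1 ∈ Dset T x₀ s(xg,yg)))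
        · exact Or.inr (Or.inr hdis)
        · obtain ⟨e, he1, he2⟩ := Finset.not_disjoint_iff.1 hdis
          rw [Finset.mem_filter] at he1 he2
          rcases D_laminar hac hfe' hge' he1.2 he2.2 with h | h
          · exact Or.inl (fun e' he' => by
              rw [Finset.mem_filter] at he' ⊢
              exact ⟨he'.1, h _ he'.2⟩)
          · exact Or.inr (Or.inl (fun e' he' => by
              rw [Finset.mem_filter] at he' ⊢
              exact ⟨he'.1, h _ he'.2⟩))
      · obtain ⟨g, hg, rfl⟩ := Finset.mem_image.1 hY
        exact Or.inr (Or.inl (hXFsub g))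
    · rcases hX with hX | rfl
      · obtain ⟨f, hf, rfl⟩ := Finset.mem_image.1 hX
        exact Or.inl (hXFsub f)
      · exact Or.inl (Finset.Subset.refl _)
  have hlamB : ∀ X ∈ famB, ∀ Y ∈ famB, X ⊆ Y ∨ Y ⊆ X ∨ Disjoint X Y := by
    intro X hX Y hY
    rw [hfamB] at hX hY
    obtain ⟨f, hf, rfl⟩ := Finset.mem_image.1 hX
    obtain ⟨g, hg, rfl⟩ := Finset.mem_image.1 hY
    rw [Finset.mem_filter] at hf hg
    obtain ⟨hfe, x, y, rfl, hBx, hBy⟩ := hf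
    obtain ⟨hge, xg, yg, rfl, hBxg, hByg⟩ := hg
    have hfe' : s(x,y) ∈ T.edgeSet := hET.mem_toFinset.1 hfe
    have hge' : s(xg,yg) ∈ T.edgeSet := hET.mem_toFinset.1 hge
    rw [hformB x y hfe' hBx hBy, hformB xg yg hge' hBxg hByg]
    by_cases hdis : Disjoint (SS.filter (fun e => (pe e).2 ∈ Dset T y₀ s(x,y)))
        (SS.filter (fun e => (pe e).2 ∈ Dset T y₀ s(xg,yg)))
    · exact Or.inr (Or.inr hdis)
    · obtain ⟨e, he1, he2⟩ := Finset.not_disjoint_iff.1 hdis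
      rw [Finset.mem_filter] at he1 he2
      rcases D_laminar hac hfe' hge' he1.2 he2.2 with h | h
      · exact Or.inl (fun e' he' => by
          rw [Finset.mem_filter] at he' ⊢
          exact ⟨he'.1, h _ he'.2⟩)
      · exact Or.inr (Or.inl (fun e' he' => by
          rw [Finset.mem_filter] at he' ⊢
          exact ⟨he'.1, h _ he'.2⟩))
  obtain ⟨φ, hφ⟩ := exists_nine_coloring famA famB hlamA hlamB
  refine ⟨φ, ?_⟩
  intro f hfT hne
  revert hfT hne
  induction f using Sym2.ind with | _ x y => ?_
  intro hfT hne
  obtain ⟨e₀, he₀⟩ := hne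
  rw [Set.mem_inter_iff] at he₀
  have he₀S : e₀ ∈ S := he₀.2
  have he₀SS : e₀ ∈ SS := hSfin.mem_toFinset.2 he₀S
  have he₀cut : e₀ ∈ fundCut G T s(x,y) := he₀.1
  obtain ⟨heq, hu, hv, hTuv, heG⟩ := hpe e₀ he₀SS
  have hcut₀ : ¬ (T.deleteEdges {s(x,y)}).Reachable (pe e₀).1 (pe e₀).2 :=
    (fundCut_iff_rep heq heG).1 he₀cut
  have hXmem : XF s(x,y) ∈ famA ∨ XF s(x,y) ∈ famB := by
    rcases trichotomy hac h01 hfT hu hv hTuv hcut₀ with ⟨hAx, hAy⟩ | ⟨hBx, hBy⟩ | heqf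
    · exact Or.inl (by
        rw [hfamA, Finset.mem_union]
        exact Or.inl (Finset.mem_image.2 ⟨s(x,y),
          Finset.mem_filter.2 ⟨hET.mem_toFinset.2 hfT, x, y, rfl, hAx, hAy⟩, rfl⟩))
    · exact Or.inr (by
        rw [hfamB]
        exact Finset.mem_image.2 ⟨s(x,y),
          Finset.mem_filter.2 ⟨hET.mem_toFinset.2 hfT, x, y, rfl, hBx, hBy⟩, rfl⟩)
    · refine Or.inl (by
        rw [hfamA, Finset.mem_union, Finset.mem_singleton]
        refine Or.inr ?_
        rw [hXF]
        refine Finset.filter_true_of_mem ?_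
        intro e he
        have : e ∈ S := hSfin.mem_toFinset.1 he
        rw [heqf]
        exact this.1)
  have hXne : (XF s(x,y)).Nonempty := ⟨e₀, by
    rw [hXF]; exact Finset.mem_filter.2 ⟨he₀SS, he₀cut⟩⟩
  obtain ⟨i, hi8, hodd⟩ := hφ (XF s(x,y)) hXmem hXne
  refine ⟨i, hi8, ?_⟩
  have hset : {e | e ∈ fundCut G T s(x,y) ∩ (fundCut G T s(x₀,y₀) \ {s(x₀,y₀)}) ∧ φ e = i}
      = ↑((XF s(x,y)).filter (fun e => φ e = i)) := by
    ext e
    simp only [Set.mem_setOf_eq, Set.mem_inter_iff, Finset.coe_filter, hXF,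
      Finset.mem_filter, hSS, hSfin.mem_toFinset, hSdef]
    tauto
  rw [hset, Set.ncard_coe_finset]
  exact hodd
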